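/- arXiv:2409.03191 — 10 statements merged into one kernel-verified Lean document; each statement's English description precedes it below -/
import Mathlib

section
/- Let a, b > 0 with a²/4 > b and c₁ = a/2 + √(a²/4 − b). Consider f(x) = 27c₁²x² − (b + 2x)³ on the interval (0, b). Then f attains its minimum on (0, b) only at x₁ = (9c₁² − 4b − 3c₁√(9c₁² − 8b))/8, f is strictly monotonically increasing on (x₁, b), and the equation f(x) = 0 has a unique solution x* in (0, b), which lies in (x₁, b). -/
theorem stmt_1 (a b : ℝ) (ha : 0 < a) (hb : 0 < b) (hab : a ^ 2 / 4 > b)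
    (c₁ : ℝ) (hc₁ : c₁ = a / 2 + Real.sqrt (a ^ 2 / 4 - b))
    (f : ℝ → ℝ) (hf : ∀ x, f x = 27 * c₁ ^ 2 * x ^ 2 - (b + 2 * x) ^ 3)
    (x₁ : ℝ)
    (hx₁ : x₁ = (9 * c₁ ^ 2 - 4 * b - 3 * c₁ * Real.sqrt (9 * c₁ ^ 2 - 8 * b)) / 8) :
    x₁ ∈ Set.Ioo (0 : ℝ) b ∧
    (∀ x ∈ Set.Ioo (0 : ℝ) b, f x₁ ≤ f x) ∧
    (∀ x ∈ Set.Ioo (0 : ℝ) b, x ≠ x₁ → f x₁ < f x) ∧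
    StrictMonoOn f (Set.Ioo x₁ b) ∧
    (∃! x : ℝ, x ∈ Set.Ioo (0 : ℝ) b ∧ f x = 0) ∧
    (∀ x ∈ Set.Ioo (0 : ℝ) b, f x = 0 → x ∈ Set.Ioo x₁ b) := by
  have hc1a : c₁ ≥ a / 2 := by
    rw [hc₁]; nlinarith [Real.sqrt_nonneg (a ^ 2 / 4 - b)]
  have hc1pos : 0 < c₁ := lt_of_lt_of_le (by linarith) hc1a
  have hbc : b < c₁ ^ 2 := by nlinarith
  have hD : 0 < 9 * c₁ ^ 2 - 8 * b := by nlinarith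
  set s : ℝ := Real.sqrt (9 * c₁ ^ 2 - 8 * b) with hs
  have hs2 : s ^ 2 = 9 * c₁ ^ 2 - 8 * b := Real.sq_sqrt hD.le
  have hspos : 0 < s := Real.sqrt_pos.mpr hD
  set x₂ : ℝ := (9 * c₁ ^ 2 - 4 * b + 3 * c₁ * s) / 8 with hx₂
  have hcspos : 0 < c₁ * s := mul_pos hc1pos hspos
  have hx1pos : 0 < x₁ := by
    rw [hx₁]
    nlinarith [hs2, hcspos, sq_nonneg b, hbc, sq_nonneg (9 * c₁ ^ 2 - 4 * b - 3 * c₁ * s)]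
  have hx1b : x₁ < b := by
    rw [hx₁]
    nlinarith [hs2, hcspos, mul_pos hb (sub_pos.mpr hbc), sq_nonneg (c₁ * s - (3 * c₁ ^ 2 - 4 * b))]
  have hbx2 : b < x₂ := by
    rw [hx₂]
    nlinarith [hs2, hcspos, mul_pos hb (sub_pos.mpr hbc), sq_nonneg (c₁ * s - (4 * b - 3 * c₁ ^ 2))]
  have hfe : f = fun x => 27 * c₁ ^ 2 * x ^ 2 - (b + 2 * x) ^ 3 := funext hf
  have key : ∀ x : ℝ, 54 * c₁ ^ 2 * x - 6 * (b + 2 * x) ^ 2 = -24 * (x - x₁) * (x - x₂) := by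
    intro x
    rw [hx₁, hx₂]
    linear_combination (-(27 / 8) * c₁ ^ 2) * hs2
  have hderiv : ∀ x : ℝ, HasDerivAt f (-24 * (x - x₁) * (x - x₂)) x := by
    intro x
    rw [hfe, ← key x]
    have h1 : HasDerivAt (fun x : ℝ => 27 * c₁ ^ 2 * x ^ 2) (27 * c₁ ^ 2 * (2 * x)) x := by
      simpa using (hasDerivAt_pow 2 x).const_mul (27 * c₁ ^ 2)
    have h2 : HasDerivAt (fun x : ℝ => (b + 2 * x) ^ 3) (3 * (b + 2 * x) ^ 2 * 2) x := by
      have hg : HasDerivAt (fun x : ℝ => b + 2 * x) 2 x := by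
        simpa using ((hasDerivAt_id x).const_mul 2).const_add b
      simpa using hg.fun_pow 3
    have := h1.fun_sub h2
    exact this.congr_deriv (by ring)
  have hcont : Continuous f :=
    continuous_iff_continuousAt.mpr fun x => (hderiv x).continuousAt
  have hmono : StrictMonoOn f (Set.Icc x₁ b) := by
    apply strictMonoOn_of_deriv_pos (convex_Icc _ _) hcont.continuousOn
    intro x hx
    rw [interior_Icc] at hx
    rw [(hderiv x).deriv]
    nlinarith [mul_pos (sub_pos.mpr hx.1) (sub_pos.mpr (lt_trans hx.2 hbx2))]
  have hanti : StrictAntiOn f (Set.Icc (0 : ℝ) x₁) := by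
    apply strictAntiOn_of_deriv_neg (convex_Icc _ _) hcont.continuousOn
    intro x hx
    rw [interior_Icc] at hx
    rw [(hderiv x).deriv]
    nlinarith [mul_pos (sub_pos.mpr (lt_trans hx.2 (lt_trans hx1b hbx2)))
      (sub_pos.mpr hx.2), sub_pos.mpr (lt_trans hx.2 hx1b)]
  have hf0 : f 0 = -b ^ 3 := by rw [hf]; ring
  have hfb : f b = 27 * b ^ 2 * (c₁ ^ 2 - b) := by rw [hf]; ring
  have hfbpos : 0 < f b := by rw [hfb]; exact mul_pos (by positivity) (sub_pos.mpr hbc)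
  have hfx1neg : f x₁ < 0 := by
    have := hanti (Set.left_mem_Icc.mpr hx1pos.le)
      (Set.right_mem_Icc.mpr hx1pos.le) hx1pos
    rw [hf0] at this
    linarith [pow_pos hb 3]
  have hmin : ∀ x ∈ Set.Ioo (0 : ℝ) b, x ≠ x₁ → f x₁ < f x := by
    intro x hx hne
    rcases lt_or_gt_of_ne hne with h | h
    · exact hanti (Set.mem_Icc.mpr ⟨hx.1.le, h.le⟩)
        (Set.right_mem_Icc.mpr hx1pos.le) h
    · exact hmono (Set.left_mem_Icc.mpr hx1b.le)
        (Set.mem_Icc.mpr ⟨h.le, hx.2.le⟩) h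
  have hzero_loc : ∀ x ∈ Set.Ioo (0 : ℝ) b, f x = 0 → x ∈ Set.Ioo x₁ b := by
    intro x hx hfx
    refine ⟨?_, hx.2⟩
    by_contra hle
    push_neg at hle
    rcases eq_or_lt_of_le hle with h | h
    · rw [h] at hfx; linarith
    · have := hanti (Set.left_mem_Icc.mpr hx1pos.le)
        (Set.mem_Icc.mpr ⟨hx.1.le, hle⟩) hx.1
      rw [hf0] at this
      linarith [pow_pos hb 3]
  obtain ⟨x0, hx0mem, hx0⟩ : ∃ x0 ∈ Set.Ioo x₁ b, f x0 = 0 := by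
    have h := intermediate_value_Ioo hx1b.le hcont.continuousOn
    have : (0 : ℝ) ∈ f '' Set.Ioo x₁ b := h ⟨hfx1neg, hfbpos⟩
    obtain ⟨x0, hmem, hfx0⟩ := this
    exact ⟨x0, hmem, hfx0⟩
  have hx0Ioo : x0 ∈ Set.Ioo (0 : ℝ) b := ⟨lt_trans hx1pos hx0mem.1, hx0mem.2⟩
  refine ⟨⟨hx1pos, hx1b⟩, ?_, hmin, hmono.mono (fun y hy => ⟨hy.1.le, hy.2.le⟩), ?_, hzero_loc⟩
  · intro x hx
    rcases eq_or_ne x x₁ with h | h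
    · rw [h]
    · exact (hmin x hx h).le
  · refine ⟨x0, ⟨hx0Ioo, hx0⟩, ?_⟩
    intro y ⟨hymem, hy⟩
    have hyIoo := hzero_loc y hymem hy
    exact hmono.injOn (Set.mem_Icc.mpr ⟨hyIoo.1.le, hyIoo.2.le⟩)
      (Set.mem_Icc.mpr ⟨hx0mem.1.le, hx0mem.2.le⟩) (by rw [hy, hx0])
end

section
/- Let a, b > 0 with a²/4 > b and c₁ = a/2 + √(a²/4 − b). The two real roots of the quadratic 4x² − (9c₁² − 4b)x + b² = 0, namely x₁ = (9c₁² − 4b − 3c₁√(9c₁² − 8b))/8 and x₂ = (9c₁² − 4b + 3c₁√(9c₁² − 8b))/8, satisfy 0 < x₁ < b < x₂. -/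
set_option maxHeartbeats 1000000


theorem stmt_2 (a b : ℝ) (ha : 0 < a) (hb : 0 < b) (hab : a ^ 2 / 4 > b)
    (c₁ : ℝ) (hc₁ : c₁ = a / 2 + Real.sqrt (a ^ 2 / 4 - b))
    (x₁ x₂ : ℝ)
    (hx₁ : x₁ = (9 * c₁ ^ 2 - 4 * b - 3 * c₁ * Real.sqrt (9 * c₁ ^ 2 - 8 * b)) / 8)
    (hx₂ : x₂ = (9 * c₁ ^ 2 - 4 * b + 3 * c₁ * Real.sqrt (9 * c₁ ^ 2 - 8 * b)) / 8) :
    4 * x₁ ^ 2 - (9 * c₁ ^ 2 - 4 * b) * x₁ + b ^ 2 = 0 ∧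
    4 * x₂ ^ 2 - (9 * c₁ ^ 2 - 4 * b) * x₂ + b ^ 2 = 0 ∧
    0 < x₁ ∧ x₁ < b ∧ b < x₂ := by
  set s := Real.sqrt (a ^ 2 / 4 - b) with hs
  have hs0 : 0 ≤ s := Real.sqrt_nonneg _
  have hs2 : s ^ 2 = a ^ 2 / 4 - b := Real.sq_sqrt (by linarith)
  have hc1pos : 0 < c₁ := by
    rw [hc₁]; positivity
  have hcb : b < c₁ ^ 2 := by
    have : a ^ 2 / 4 ≤ c₁ ^ 2 := by rw [hc₁]; nlinarith
    linarith
  have hDpos : 0 < 9 * c₁ ^ 2 - 8 * b := by nlinarith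
  set t := Real.sqrt (9 * c₁ ^ 2 - 8 * b) with hts
  have ht2 : t ^ 2 = 9 * c₁ ^ 2 - 8 * b := Real.sq_sqrt (by linarith)
  have ht0 : 0 < t := Real.sqrt_pos.mpr hDpos
  have he : (3 * c₁ * t) ^ 2 = 9 * c₁ ^ 2 * (9 * c₁ ^ 2 - 8 * b) := by
    rw [mul_pow, mul_pow, ht2]; ring
  have hbc : 0 < b * (c₁ ^ 2 - b) := mul_pos hb (by linarith)
  refine ⟨by rw [hx₁]; linear_combination (9 * c₁ ^ 2 / 16) * ht2,
    by rw [hx₂]; linear_combination (9 * c₁ ^ 2 / 16) * ht2, ?_, ?_, ?_⟩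
  · rw [hx₁]
    have key : (3 * c₁ * t) ^ 2 < (9 * c₁ ^ 2 - 4 * b) ^ 2 := by
      rw [he]; nlinarith [sq_nonneg b]
    have h1 : 3 * c₁ * t < 9 * c₁ ^ 2 - 4 * b :=
      lt_of_pow_lt_pow_left₀ 2 (by nlinarith) key
    linarith
  · rw [hx₁]
    have key : (9 * c₁ ^ 2 - 12 * b) ^ 2 < (3 * c₁ * t) ^ 2 := by
      rw [he]; nlinarith [hbc]
    have h1 : 9 * c₁ ^ 2 - 12 * b < 3 * c₁ * t :=
      lt_of_pow_lt_pow_left₀ 2 (by positivity) key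
    linarith
  · rw [hx₂]
    have key : (12 * b - 9 * c₁ ^ 2) ^ 2 < (3 * c₁ * t) ^ 2 := by
      rw [he]; nlinarith [hbc]
    have h1 : 12 * b - 9 * c₁ ^ 2 < 3 * c₁ * t :=
      lt_of_pow_lt_pow_left₀ 2 (by positivity) key
    linarith
end

section
/- Let k₂ > 0 and N > 0, and let z₁ be the unique solution of tan z = z/3 in (π, 3π/2) (so sin z₁ < 0). Then the function Φ(p) = p² + k₂·sin(pN)/(pN) satisfies Φ(p) ≥ 0 for all p ∈ ℝ \ {0} if and only if 1/k₂ ≥ −N²·sin(z₁)/z₁³. -/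
open Real Set

private lemma hasDeriv_h5 (z : ℝ) :
    HasDerivAt (fun z => 3 * Real.sin z - z * Real.cos z) (2 * Real.cos z + z * Real.sin z) z := by
  have h1 := (Real.hasDerivAt_sin z).const_mul 3
  have h2 := (hasDerivAt_id z).mul (Real.hasDerivAt_cos z)
  refine (h1.sub h2).congr_deriv ?_
  simp [id]
  ring

private lemma hasDeriv_f5 (z : ℝ) (hz : z ≠ 0) :
    HasDerivAt (fun z => -Real.sin z / z ^ 3)
      ((3 * Real.sin z - z * Real.cos z) / z ^ 4) z := by
  have h1 := ((Real.hasDerivAt_sin z).neg).div (hasDerivAt_pow 3 z) (pow_ne_zero 3 hz)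
  refine h1.congr_deriv ?_
  simp only [Pi.neg_apply]
  field_simp
  ring

private lemma key_lemma5 (z₁ : ℝ) (h1 : Real.pi < z₁) (h2 : z₁ < 3 * Real.pi / 2)
    (htan : Real.tan z₁ = z₁ / 3) :
    ∀ z : ℝ, 0 < z → -Real.sin z / z ^ 3 ≤ -Real.sin z₁ / z₁ ^ 3 := by
  have hπ := Real.pi_pos
  have hπ3 := Real.pi_gt_three
  have hz₁0 : 0 < z₁ := lt_trans hπ h1
  have hcos : Real.cos z₁ < 0 :=
    Real.cos_neg_of_pi_div_two_lt_of_lt (by linarith) (by linarith)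
  -- z₁ - π > π/4
  have hq : Real.pi / 4 < z₁ - Real.pi := by
    by_contra hle
    push_neg at hle
    have hmemA : z₁ - Real.pi ∈ Ioo (-(Real.pi/2)) (Real.pi/2) :=
      ⟨by linarith, by linarith⟩
    have hmemB : Real.pi / 4 ∈ Ioo (-(Real.pi/2)) (Real.pi/2) := ⟨by linarith, by linarith⟩
    have := Real.strictMonoOn_tan.monotoneOn hmemA hmemB hle
    rw [Real.tan_sub_pi, htan, Real.tan_pi_div_four] at this
    linarith
  -- sin z₁ ≤ -√2/2
  have hsin2 : Real.sin z₁ ≤ -(Real.sqrt 2 / 2) := by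
    have hmemA : Real.pi / 4 ∈ Icc (-(Real.pi/2)) (Real.pi/2) := ⟨by linarith, by linarith⟩
    have hmemB : z₁ - Real.pi ∈ Icc (-(Real.pi/2)) (Real.pi/2) :=
      ⟨by linarith, by linarith⟩
    have := Real.strictMonoOn_sin.monotoneOn hmemA hmemB (le_of_lt hq)
    rw [Real.sin_sub_pi, Real.sin_pi_div_four] at this
    linarith
  have hsqrt2 : (1:ℝ) < Real.sqrt 2 := by
    rw [show (1:ℝ) = Real.sqrt 1 by simp]
    exact Real.sqrt_lt_sqrt (by norm_num) (by norm_num)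
  have hsinneg : Real.sin z₁ < 0 := by linarith
  -- 3 sin z₁ = z₁ cos z₁
  have h3z : 3 * Real.sin z₁ = z₁ * Real.cos z₁ := by
    have hcosne : Real.cos z₁ ≠ 0 := ne_of_lt hcos
    rw [Real.tan_eq_sin_div_cos] at htan
    field_simp [hcosne] at htan
    linarith
  -- h strictly antitone on [π, 3π/2]
  have hh_anti : StrictAntiOn (fun z => 3 * Real.sin z - z * Real.cos z)
      (Icc Real.pi (3 * Real.pi / 2)) := by
    apply strictAntiOn_of_deriv_neg (convex_Icc _ _)
    · exact (by fun_prop : Continuous fun z => 3 * Real.sin z - z * Real.cos z).continuousOn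
    · intro x hx
      rw [interior_Icc] at hx
      rw [(hasDeriv_h5 x).deriv]
      have hcx : Real.cos x < 0 :=
        Real.cos_neg_of_pi_div_two_lt_of_lt (by linarith [hx.1]) (by linarith [hx.2])
      have hsx : Real.sin x < 0 := by
        have : 0 < Real.sin (x - Real.pi) :=
          Real.sin_pos_of_pos_of_lt_pi (by linarith [hx.1]) (by linarith [hx.2])
        rw [Real.sin_sub_pi] at this; linarith
      nlinarith [hx.1]
  have hz₁mem : z₁ ∈ Icc Real.pi (3 * Real.pi / 2) := ⟨le_of_lt h1, le_of_lt h2⟩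
  have hh0 : 3 * Real.sin z₁ - z₁ * Real.cos z₁ = 0 := by linarith
  -- f monotone on [π, z₁]
  have hcontf : ∀ s : Set ℝ, (∀ x ∈ s, x ≠ 0) →
      ContinuousOn (fun z => -Real.sin z / z ^ 3) s := by
    intro s hs
    exact ContinuousOn.div (by fun_prop) (by fun_prop)
      (fun x hx => pow_ne_zero 3 (hs x hx))
  have hmono : MonotoneOn (fun z => -Real.sin z / z ^ 3) (Icc Real.pi z₁) := by
    apply monotoneOn_of_deriv_nonneg (convex_Icc _ _)
    · exact hcontf _ (fun x hx => ne_of_gt (lt_of_lt_of_le hπ hx.1))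
    · intro x hx
      rw [interior_Icc] at hx
      exact ((hasDeriv_f5 x (ne_of_gt (lt_trans hπ hx.1))).differentiableAt).differentiableWithinAt
    · intro x hx
      rw [interior_Icc] at hx
      have hx0 : x ≠ 0 := ne_of_gt (lt_trans hπ hx.1)
      rw [(hasDeriv_f5 x hx0).deriv]
      have hxmem : x ∈ Icc Real.pi (3 * Real.pi / 2) := ⟨le_of_lt hx.1, by linarith [hx.2]⟩
      have := hh_anti hxmem hz₁mem hx.2
      simp only [hh0] at this
      have hx4 : (0:ℝ) < x ^ 4 := by positivity
      exact div_nonneg (by linarith) (le_of_lt hx4)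
  -- f antitone on [z₁, 2π]
  have hanti : AntitoneOn (fun z => -Real.sin z / z ^ 3) (Icc z₁ (2 * Real.pi)) := by
    apply antitoneOn_of_deriv_nonpos (convex_Icc _ _)
    · exact hcontf _ (fun x hx => ne_of_gt (lt_of_lt_of_le hz₁0 hx.1))
    · intro x hx
      rw [interior_Icc] at hx
      have hx0 : x ≠ 0 := ne_of_gt (lt_trans hz₁0 hx.1)
      exact ((hasDeriv_f5 x hx0).differentiableAt).differentiableWithinAt
    · intro x hx
      rw [interior_Icc] at hx
      have hx0 : x ≠ 0 := ne_of_gt (lt_trans hz₁0 hx.1)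
      rw [(hasDeriv_f5 x hx0).deriv]
      have hx4 : (0:ℝ) < x ^ 4 := by positivity
      have hnum : 3 * Real.sin x - x * Real.cos x ≤ 0 := by
        rcases le_or_gt x (3 * Real.pi / 2) with hle | hgt
        · have hxmem : x ∈ Icc Real.pi (3 * Real.pi / 2) := ⟨by linarith [hx.1], hle⟩
          have := hh_anti hz₁mem hxmem hx.1
          simp only [hh0] at this
          linarith
        · have hsx : Real.sin x ≤ 0 := by
            have : 0 ≤ Real.sin (x - Real.pi) :=
              Real.sin_nonneg_of_nonneg_of_le_pi (by linarith [hx.1]) (by linarith [hx.2])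
            rw [Real.sin_sub_pi] at this; linarith
          have hcx : 0 ≤ Real.cos x := by
            have hmem : x - 2 * Real.pi ∈ Icc (-(Real.pi/2)) (Real.pi/2) :=
              ⟨by linarith, by linarith [hx.2]⟩
            have := Real.cos_nonneg_of_mem_Icc hmem
            rwa [Real.cos_sub_two_pi] at this
          nlinarith [hx.1]
      exact div_nonpos_of_nonpos_of_nonneg hnum (le_of_lt hx4)
  -- conclusion
  intro z hz
  have hRpos : 0 < -Real.sin z₁ / z₁ ^ 3 := by
    apply div_pos (by linarith) (by positivity)
  rcases le_or_gt z Real.pi with hle | hgt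
  · have hsz : 0 ≤ Real.sin z := Real.sin_nonneg_of_nonneg_of_le_pi (le_of_lt hz) hle
    have : -Real.sin z / z ^ 3 ≤ 0 :=
      div_nonpos_of_nonpos_of_nonneg (by linarith) (by positivity)
    linarith
  · rcases le_or_gt z (2 * Real.pi) with hle2 | hgt2
    · rcases le_or_gt z z₁ with hlez | hgtz
      · exact hmono ⟨le_of_lt hgt, hlez⟩ ⟨le_of_lt h1, le_refl _⟩ hlez
      · exact hanti ⟨le_refl _, by linarith⟩ ⟨le_of_lt hgtz, hle2⟩ (le_of_lt hgtz)
    · -- z > 2π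
      have hb1 : -Real.sin z / z ^ 3 ≤ 1 / (2 * Real.pi) ^ 3 := by
        apply div_le_div₀ (by norm_num) (by nlinarith [Real.neg_one_le_sin z])
          (by positivity) (pow_le_pow_left₀ (by positivity) (le_of_lt hgt2) 3)
      have hb2 : (Real.sqrt 2 / 2) / (3 * Real.pi / 2) ^ 3 ≤ -Real.sin z₁ / z₁ ^ 3 := by
        apply div_le_div₀ (by linarith) (by linarith) (by positivity)
          (pow_le_pow_left₀ (le_of_lt hz₁0) (le_of_lt h2) 3)
      have hb3 : (1:ℝ) / (2 * Real.pi) ^ 3 ≤ (Real.sqrt 2 / 2) / (3 * Real.pi / 2) ^ 3 := by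
        rw [div_le_div_iff₀ (by positivity) (by positivity)]
        have hs : (27:ℝ)/32 < Real.sqrt 2 := by
          rw [show (27:ℝ)/32 = Real.sqrt ((27/32)^2) by
            rw [Real.sqrt_sq]; norm_num]
          exact Real.sqrt_lt_sqrt (by positivity) (by norm_num)
        nlinarith [mul_pos (sub_pos.mpr hs) (pow_pos hπ 3)]
      linarith

theorem stmt_5 (k₂ N : ℝ) (hk₂ : 0 < k₂) (hN : 0 < N)
    (z₁ : ℝ) (hz₁ : z₁ ∈ Set.Ioo Real.pi (3 * Real.pi / 2))
    (htan : Real.tan z₁ = z₁ / 3)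
    (huniq : ∀ z ∈ Set.Ioo Real.pi (3 * Real.pi / 2), Real.tan z = z / 3 → z = z₁) :
    (∀ p : ℝ, p ≠ 0 → 0 ≤ p ^ 2 + k₂ * Real.sin (p * N) / (p * N)) ↔
      1 / k₂ ≥ -N ^ 2 * Real.sin z₁ / z₁ ^ 3 := by
  obtain ⟨h1, h2⟩ := hz₁
  have hπ := Real.pi_pos
  have hz₁0 : 0 < z₁ := lt_trans hπ h1
  have hN0 : N ≠ 0 := ne_of_gt hN
  constructor
  · intro H
    have hp : z₁ / N ≠ 0 := by positivity
    have h0 := H (z₁ / N) hp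
    rw [div_mul_cancel₀ _ hN0] at h0
    have hmul : 0 ≤ ((z₁ / N) ^ 2 + k₂ * Real.sin z₁ / z₁) * (N ^ 2 * z₁) :=
      mul_nonneg h0 (by positivity)
    have heq : ((z₁ / N) ^ 2 + k₂ * Real.sin z₁ / z₁) * (N ^ 2 * z₁)
        = z₁ ^ 3 + k₂ * N ^ 2 * Real.sin z₁ := by
      field_simp
    rw [heq] at hmul
    rw [ge_iff_le, div_le_div_iff₀ (by positivity) hk₂]
    nlinarith
  · intro H p hp
    have key := key_lemma5 z₁ h1 h2 htan
    have claim : ∀ z : ℝ, 0 < z → 0 ≤ z ^ 2 / N ^ 2 + k₂ * Real.sin z / z := by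
      intro z hz
      have h3 : -Real.sin z / z ^ 3 ≤ -Real.sin z₁ / z₁ ^ 3 := key z hz
      have h4 : -N ^ 2 * Real.sin z / z ^ 3 ≤ 1 / k₂ := by
        rw [ge_iff_le] at H
        calc -N ^ 2 * Real.sin z / z ^ 3 = N ^ 2 * (-Real.sin z / z ^ 3) := by ring
          _ ≤ N ^ 2 * (-Real.sin z₁ / z₁ ^ 3) := by nlinarith [sq_nonneg N]
          _ = -N ^ 2 * Real.sin z₁ / z₁ ^ 3 := by ring
          _ ≤ 1 / k₂ := H
      rw [div_le_div_iff₀ (by positivity) hk₂] at h4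
      rw [div_add_div _ _ (by positivity : (N:ℝ) ^ 2 ≠ 0) (ne_of_gt hz), le_div_iff₀ (by positivity)]
      nlinarith
    rcases lt_or_gt_of_ne hp with hneg | hpos
    · have := claim (-(p * N)) (by nlinarith)
      have heq : (-(p * N)) ^ 2 / N ^ 2 + k₂ * Real.sin (-(p * N)) / (-(p * N))
          = p ^ 2 + k₂ * Real.sin (p * N) / (p * N) := by
        rw [Real.sin_neg]
        rw [mul_neg, neg_div_neg_eq]
        field_simp
      rwa [heq] at this
    · have := claim (p * N) (by positivity)
      have heq : (p * N) ^ 2 / N ^ 2 + k₂ * Real.sin (p * N) / (p * N)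
          = p ^ 2 + k₂ * Real.sin (p * N) / (p * N) := by
        field_simp
      rwa [heq] at this
end

section
/- Let a, b, d, α > 0 with a²/4 > b and c₁ = a/2 + √(a²/4 − b). Then the function Φ₁(p) = d·p² + c₁²·α²/(p² + α²) − b satisfies Φ₁(p) ≥ 0 for all p ∈ ℝ if and only if d ≥ (c₁ − √(c₁² − b))²/α². -/
set_option maxHeartbeats 1000000


theorem stmt_6 (a b d α : ℝ) (ha : 0 < a) (hb : 0 < b) (hd : 0 < d) (hα : 0 < α)
    (hab : a ^ 2 / 4 > b)
    (c₁ : ℝ) (hc₁ : c₁ = a / 2 + Real.sqrt (a ^ 2 / 4 - b)) :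
    (∀ p : ℝ, 0 ≤ d * p ^ 2 + c₁ ^ 2 * α ^ 2 / (p ^ 2 + α ^ 2) - b) ↔
      d ≥ (c₁ - Real.sqrt (c₁ ^ 2 - b)) ^ 2 / α ^ 2 := by
  have hs2 : Real.sqrt (a ^ 2 / 4 - b) ^ 2 = a ^ 2 / 4 - b :=
    Real.sq_sqrt (by linarith)
  have hspos : 0 < Real.sqrt (a ^ 2 / 4 - b) := Real.sqrt_pos.2 (by linarith)
  have hc1pos : 0 < c₁ := by rw [hc₁]; positivity
  have hbc : b < c₁ ^ 2 := by
    rw [hc₁]; nlinarith [hs2, mul_pos ha hspos]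
  set σ := Real.sqrt (c₁ ^ 2 - b) with hσdef
  have hσ2 : σ ^ 2 = c₁ ^ 2 - b := Real.sq_sqrt (by linarith)
  have hσpos : 0 < σ := Real.sqrt_pos.2 (by linarith)
  clear_value σ
  have hσlt : σ < c₁ := by nlinarith [hσ2, hσpos, hc1pos]
  have hα2 : (0:ℝ) < α ^ 2 := by positivity
  constructor
  · -- forward
    intro h
    by_contra hlt
    push_neg at hlt
    have hx : d * α ^ 2 < (c₁ - σ) ^ 2 := (lt_div_iff₀ hα2).1 hlt
    have hrb : (c₁ - σ) ^ 2 ≤ b := by nlinarith [hσ2, hσpos, hσlt]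
    have hxb : d * α ^ 2 < b := lt_of_lt_of_le hx hrb
    set p₀ := Real.sqrt ((b - d * α ^ 2) / (2 * d)) with hp₀def
    have hp0sq : p₀ ^ 2 = (b - d * α ^ 2) / (2 * d) :=
      Real.sq_sqrt (div_nonneg (by linarith) (by positivity))
    clear_value p₀
    have htpos : 0 < p₀ ^ 2 + α ^ 2 := by positivity
    have h2 := h p₀
    have h3 : 0 ≤ (d * p₀ ^ 2 - b) * (p₀ ^ 2 + α ^ 2) + c₁ ^ 2 * α ^ 2 := by
      have h4 := mul_nonneg h2 htpos.le
      have h5 : (d * p₀ ^ 2 + c₁ ^ 2 * α ^ 2 / (p₀ ^ 2 + α ^ 2) - b) * (p₀ ^ 2 + α ^ 2)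
          = (d * p₀ ^ 2 - b) * (p₀ ^ 2 + α ^ 2) + c₁ ^ 2 * α ^ 2 := by
        field_simp; ring
      linarith [h5 ▸ h4]
    have hp2 : 2 * d * p₀ ^ 2 = b - d * α ^ 2 := by
      rw [hp0sq]; field_simp
    have hw0 : 2 * d * p₀ ^ 2 - (b - d * α ^ 2) = 0 := by linarith
    have hident : ((d * p₀ ^ 2 - b) * (p₀ ^ 2 + α ^ 2) + c₁ ^ 2 * α ^ 2) * (4 * d)
        = 4 * d * (c₁ ^ 2 * α ^ 2) - (b + d * α ^ 2) ^ 2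
          + (2 * d * p₀ ^ 2 - (b - d * α ^ 2)) ^ 2 := by ring
    have hmain : (b + d * α ^ 2) ^ 2 ≤ 4 * d * (c₁ ^ 2 * α ^ 2) := by
      have h6 := mul_nonneg h3 (by positivity : (0:ℝ) ≤ 4 * d)
      rw [hident, hw0] at h6
      simpa using h6
    have hxr : d * α ^ 2 < (c₁ + σ) ^ 2 := by nlinarith [hσpos, hc1pos]
    have hP := mul_pos (sub_pos.2 hx) (sub_pos.2 hxr)
    have hident2 : ((c₁ - σ) ^ 2 - d * α ^ 2) * ((c₁ + σ) ^ 2 - d * α ^ 2)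
        = (b + d * α ^ 2) ^ 2 - 4 * d * (c₁ ^ 2 * α ^ 2)
          + (σ ^ 2 - (c₁ ^ 2 - b)) * (σ ^ 2 - c₁ ^ 2 - b - 2 * (d * α ^ 2)) := by
      ring
    rw [hσ2] at hident2
    simp at hident2
    linarith [hmain, hP, hident2.le]
  · -- backward
    intro hdge p
    have hx : (c₁ - σ) ^ 2 ≤ d * α ^ 2 := by
      rw [ge_iff_le, div_le_iff₀ hα2] at hdge; linarith
    have htpos : 0 < p ^ 2 + α ^ 2 := by positivity
    have hkey : 0 ≤ (d * p ^ 2 - b) * (p ^ 2 + α ^ 2) + c₁ ^ 2 * α ^ 2 := by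
      rcases le_or_gt b (d * α ^ 2) with hcase | hcase
      · have h1 : 0 ≤ d * (p ^ 2 + α ^ 2) - b := by nlinarith [sq_nonneg p]
        have hid1 : (d * p ^ 2 - b) * (p ^ 2 + α ^ 2) + c₁ ^ 2 * α ^ 2
            = p ^ 2 * (d * (p ^ 2 + α ^ 2) - b) + α ^ 2 * (c₁ ^ 2 - b) := by ring
        rw [hid1]
        exact add_nonneg (mul_nonneg (sq_nonneg p) h1)
          (mul_nonneg hα2.le (by linarith))
      · have hρ2 : Real.sqrt d ^ 2 = d := Real.sq_sqrt hd.le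
        have hρpos : 0 < Real.sqrt d := Real.sqrt_pos.2 hd
        have hxr : d * α ^ 2 ≤ (c₁ + σ) ^ 2 := by
          nlinarith [mul_pos hc1pos hσpos, hσ2]
        have hP := mul_nonneg (sub_nonneg.2 hx) (sub_nonneg.2 hxr)
        have hid2 : (d * α ^ 2 - (c₁ - σ) ^ 2) * ((c₁ + σ) ^ 2 - d * α ^ 2)
            = 4 * d * (c₁ ^ 2 * α ^ 2) - (b + d * α ^ 2) ^ 2
              - (σ ^ 2 - (c₁ ^ 2 - b)) * (σ ^ 2 - c₁ ^ 2 - b - 2 * (d * α ^ 2)) := by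
          ring
        rw [hσ2] at hid2
        have hdisc : (b + d * α ^ 2) ^ 2 ≤ 4 * d * (c₁ ^ 2 * α ^ 2) := by
          nlinarith [hP, hid2]
        have hsq : (2 * Real.sqrt d * c₁ * α) ^ 2 = 4 * d * (c₁ ^ 2 * α ^ 2) := by
          linear_combination (4 * c₁ ^ 2 * α ^ 2) * hρ2
        have h2ρ : b + d * α ^ 2 ≤ 2 * Real.sqrt d * c₁ * α := by
          have h' : (b + d * α ^ 2) ^ 2 ≤ (2 * Real.sqrt d * c₁ * α) ^ 2 := by
            rw [hsq]; exact hdisc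
          nlinarith [h', mul_pos (mul_pos (mul_pos two_pos hρpos) hc1pos) hα,
            mul_pos hd hα2, hb]
        have hid3 : (d * p ^ 2 - b) * (p ^ 2 + α ^ 2) + c₁ ^ 2 * α ^ 2
            = (Real.sqrt d * (p ^ 2 + α ^ 2) - c₁ * α) ^ 2
              + (2 * Real.sqrt d * c₁ * α - (b + d * α ^ 2)) * (p ^ 2 + α ^ 2)
              + (d - Real.sqrt d ^ 2) * (p ^ 2 + α ^ 2) ^ 2 := by ring
        rw [hρ2] at hid3
        rw [hid3]
        have := mul_nonneg (sub_nonneg.2 h2ρ) htpos.le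
        nlinarith [sq_nonneg (Real.sqrt d * (p ^ 2 + α ^ 2) - c₁ * α), this]
    have e : d * p ^ 2 + c₁ ^ 2 * α ^ 2 / (p ^ 2 + α ^ 2) - b
        = ((d * p ^ 2 - b) * (p ^ 2 + α ^ 2) + c₁ ^ 2 * α ^ 2) / (p ^ 2 + α ^ 2) := by
      field_simp; ring
    rw [e]
    exact div_nonneg hkey htpos.le
end

section
/- Let a, b, d, α > 0 with a²/4 > b, c₁ = a/2 + √(a²/4 − b), and let x* ∈ (0, b) be the unique zero of f(x) = 27c₁²x² − (b + 2x)³ on (0, b). Then the function Φ₁(p₁, p₂) = d·(p₁² + p₂²) + c₁²·α⁴/((p₁² + α²)(p₂² + α²)) − b satisfies Φ₁(p) ≥ 0 for all p = (p₁, p₂) ∈ ℝ² if and only if d ≥ x*/α². -/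
private lemma cuberoot_cube (y : ℝ) (hy : 0 ≤ y) : (y ^ ((1:ℝ)/3)) ^ (3:ℕ) = y := by
  rw [← Real.rpow_natCast (y ^ ((1:ℝ)/3)) 3, ← Real.rpow_mul hy]
  norm_num

private lemma cube_le {u v : ℝ} (hv : 0 ≤ v) (h : u ^ 3 ≤ v ^ 3) : u ≤ v :=
  le_of_pow_le_pow_left₀ three_ne_zero hv h

private lemma exists_cuberoot (y : ℝ) (hy : 0 < y) : ∃ q : ℝ, 0 < q ∧ q ^ 3 = y :=
  ⟨y ^ ((1:ℝ)/3), Real.rpow_pos_of_pos hy _, cuberoot_cube _ hy.le⟩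

set_option maxHeartbeats 1000000 in
theorem stmt_9 (a b d α : ℝ) (ha : 0 < a) (hb : 0 < b) (hd : 0 < d) (hα : 0 < α)
    (hab : a ^ 2 / 4 > b)
    (c₁ : ℝ) (hc₁ : c₁ = a / 2 + Real.sqrt (a ^ 2 / 4 - b))
    (xs : ℝ) (hxs : xs ∈ Set.Ioo (0 : ℝ) b)
    (hzero : 27 * c₁ ^ 2 * xs ^ 2 - (b + 2 * xs) ^ 3 = 0)
    (huniq : ∀ x ∈ Set.Ioo (0 : ℝ) b,
      27 * c₁ ^ 2 * x ^ 2 - (b + 2 * x) ^ 3 = 0 → x = xs) :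
    (∀ p₁ p₂ : ℝ,
        0 ≤ d * (p₁ ^ 2 + p₂ ^ 2) +
            c₁ ^ 2 * α ^ 4 / ((p₁ ^ 2 + α ^ 2) * (p₂ ^ 2 + α ^ 2)) - b) ↔
      d ≥ xs / α ^ 2 := by
  obtain ⟨hxs0, hxsb⟩ := hxs
  have hα2 : 0 < α ^ 2 := by positivity
  have hs0 : 0 < Real.sqrt (a ^ 2 / 4 - b) := Real.sqrt_pos.mpr (by linarith)
  have hsq : Real.sqrt (a ^ 2 / 4 - b) ^ 2 = a ^ 2 / 4 - b := Real.sq_sqrt (by linarith)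
  have hcb : b < c₁ ^ 2 := by
    rw [hc₁]; nlinarith [hs0, hsq]
  have hc0 : 0 < c₁ := by rw [hc₁]; linarith
  set F : ℝ → ℝ := fun y => 27 * c₁ ^ 2 * y ^ 2 - (b + 2 * y) ^ 3 with hF
  have hFc : Continuous F := by fun_prop
  have hFb : 0 < F b := by
    simp only [hF]
    nlinarith [mul_pos (mul_pos hb hb) (sub_pos.2 hcb)]
  constructor
  · -- forward: Φ ≥ 0 everywhere → d ≥ xs/α²
    intro h
    rw [ge_iff_le, div_le_iff₀ hα2]
    by_contra hlt
    push_neg at hlt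
    have hx0 : 0 < d * α ^ 2 := by positivity
    have hxb : d * α ^ 2 < b := lt_trans hlt hxsb
    have hFx : F (d * α ^ 2) < 0 := by
      rcases lt_trichotomy (F (d * α ^ 2)) 0 with h1 | h1 | h1
      · exact h1
      · exact absurd (huniq (d * α ^ 2) ⟨hx0, hxb⟩ h1) (by linarith)
      · have hF0 : F 0 < 0 := by
          simp only [hF]
          norm_num
          nlinarith [pow_pos hb 3]
        obtain ⟨z, hz, hz0⟩ := intermediate_value_Ioo (le_of_lt hx0) hFc.continuousOn
          (Set.mem_Ioo.mpr ⟨hF0, h1⟩)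
        have := huniq z ⟨hz.1, lt_trans hz.2 hxb⟩ hz0
        linarith [hz.2]
    have hxc : d * α ^ 2 < c₁ ^ 2 := by linarith
    obtain ⟨q, hq0, hq3⟩ := exists_cuberoot (c₁ ^ 2 * α ^ 4 / d) (by positivity)
    have hdq3 : d * q ^ 3 = c₁ ^ 2 * α ^ 4 := by
      rw [hq3]; field_simp
    have hqα : α ^ 2 < q := by
      by_contra hle
      push_neg at hle
      have h6 : q ^ 3 ≤ (α ^ 2) ^ 3 := pow_le_pow_left₀ hq0.le hle 3
      have h7 : d * q ^ 3 ≤ d * (α ^ 2) ^ 3 := mul_le_mul_of_nonneg_left h6 hd.le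
      nlinarith [mul_lt_mul_of_pos_right hxc (pow_pos hα 4)]
    obtain ⟨p, hp2⟩ : ∃ p : ℝ, p ^ 2 = q - α ^ 2 :=
      ⟨Real.sqrt (q - α ^ 2), Real.sq_sqrt (by linarith)⟩
    have hspec := h p p
    rw [hp2] at hspec
    have hqq : q - α ^ 2 + α ^ 2 = q := by ring
    rw [hqq] at hspec
    have hdiv : c₁ ^ 2 * α ^ 4 / (q * q) = d * q := by
      rw [div_eq_iff (by positivity)]
      nlinarith [hdq3]
    rw [hdiv] at hspec
    have h3dq : 3 * d * q < b + 2 * (d * α ^ 2) := by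
      have hcube : (3 * d * q) ^ 3 < (b + 2 * (d * α ^ 2)) ^ 3 := by
        have he : (3 * d * q) ^ 3 = 27 * c₁ ^ 2 * (d * α ^ 2) ^ 2 := by
          have he2 : (3 * d * q) ^ 3 = 27 * d ^ 2 * (d * q ^ 3) := by ring
          rw [he2, hdq3]; ring
        rw [he]
        simp only [hF] at hFx
        linarith
      by_contra hge
      push_neg at hge
      have := pow_le_pow_left₀ (by positivity : (0:ℝ) ≤ b + 2 * (d * α ^ 2)) hge 3
      linarith
    nlinarith [hspec]
  · -- reverse
    intro hge p₁ p₂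
    rw [ge_iff_le, div_le_iff₀ hα2] at hge
    have hx0 : 0 < d * α ^ 2 := by positivity
    set s := p₁ ^ 2 + α ^ 2 with hsdef
    set t := p₂ ^ 2 + α ^ 2 with htdef
    have hs : α ^ 2 ≤ s := by simp [hsdef]; positivity
    have ht : α ^ 2 ≤ t := by simp [htdef]; positivity
    have hspos : 0 < s := lt_of_lt_of_le hα2 hs
    have htpos : 0 < t := lt_of_lt_of_le hα2 ht
    obtain ⟨r, hr0, hr2, hst⟩ : ∃ r : ℝ, 0 < r ∧ r ^ 2 = s * t ∧ 2 * r ≤ s + t := by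
      refine ⟨Real.sqrt (s * t), Real.sqrt_pos.mpr (by positivity),
        Real.sq_sqrt (by positivity), ?_⟩
      have h1 : Real.sqrt s ^ 2 = s := Real.sq_sqrt hspos.le
      have h2 : Real.sqrt t ^ 2 = t := Real.sq_sqrt htpos.le
      have h3 : Real.sqrt (s * t) = Real.sqrt s * Real.sqrt t := Real.sqrt_mul hspos.le t
      nlinarith [sq_nonneg (Real.sqrt s - Real.sqrt t)]
    have hrα : α ^ 2 ≤ r := by
      by_contra hc
      push_neg at hc
      have h9 : r ^ 2 < (α ^ 2) ^ 2 := by nlinarith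
      nlinarith [mul_le_mul hs ht hα2.le hspos.le]
    have claim : 0 ≤ 2 * d * r ^ 3 - (b + 2 * (d * α ^ 2)) * r ^ 2 + c₁ ^ 2 * α ^ 4 := by
      rcases le_or_gt (c₁ ^ 2) (d * α ^ 2) with hcase | hcase
      · nlinarith [mul_nonneg (mul_nonneg (sub_nonneg.2 hcase) (sq_nonneg r)) (sub_nonneg.2 hrα),
          mul_nonneg (mul_nonneg (sub_nonneg.2 hcb.le) (sub_nonneg.2 hrα)) (by positivity : (0:ℝ) ≤ α ^ 4),
          mul_nonneg (mul_nonneg (by nlinarith : (0:ℝ) ≤ 4 * c₁ ^ 2 - b) (sq_nonneg (r - α ^ 2))) hα2.le,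
          mul_nonneg (by positivity : (0:ℝ) ≤ 2 * c₁ ^ 2) (pow_nonneg (sub_nonneg.2 hrα) 3),
          mul_pos (mul_pos hα2 hα2) hα2, sub_nonneg.2 hcb.le]
      · have hfx : (b + 2 * (d * α ^ 2)) ^ 3 ≤ 27 * c₁ ^ 2 * (d * α ^ 2) ^ 2 := by
          rcases lt_trichotomy (d * α ^ 2) b with hxb | hxb | hxb
          · by_contra hneg
            push_neg at hneg
            have hFx : F (d * α ^ 2) < 0 := by simp only [hF]; linarith
            obtain ⟨z, hz, hz0⟩ := intermediate_value_Ioo (le_of_lt hxb) hFc.continuousOn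
              (Set.mem_Ioo.mpr ⟨hFx, hFb⟩)
            have := huniq z ⟨lt_trans hx0 hz.1, hz.2⟩ hz0
            linarith [hz.1]
          · rw [hxb]; nlinarith [mul_pos (mul_pos hb hb) (sub_pos.2 hcb)]
          · nlinarith [mul_pos hx0 hx0,
              mul_nonneg (mul_nonneg (sub_nonneg.2 hxb.le) hx0.le) hx0.le,
              mul_nonneg (mul_nonneg (sub_nonneg.2 hxb.le) (sub_nonneg.2 hxb.le)) hx0.le,
              mul_nonneg (mul_nonneg (sub_nonneg.2 hxb.le) (sub_nonneg.2 hxb.le)) (sub_nonneg.2 hxb.le),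
              mul_nonneg (sub_nonneg.2 hcase.le) (sq_nonneg (d * α ^ 2)), mul_pos hb hx0]
        obtain ⟨cc, hcc0, hcc3⟩ := exists_cuberoot (c₁ ^ 2 * α ^ 4 / d) (by positivity)
        have hdcc3 : d * cc ^ 3 = c₁ ^ 2 * α ^ 4 := by rw [hcc3]; field_simp
        have hm : b + 2 * (d * α ^ 2) ≤ 3 * d * cc := by
          apply cube_le (by positivity)
          have h27 : (3 * d * cc) ^ 3 = 27 * c₁ ^ 2 * (d * α ^ 2) ^ 2 := by
            have he2 : (3 * d * cc) ^ 3 = 27 * d ^ 2 * (d * cc ^ 3) := by ring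
            rw [he2, hdcc3]; ring
          rw [h27]; exact hfx
        nlinarith [mul_nonneg (mul_nonneg hd.le (sq_nonneg (r - cc)))
            (by positivity : (0:ℝ) ≤ 2 * r + cc),
          mul_nonneg (sub_nonneg.2 hm) (sq_nonneg r), hdcc3]
    have hdivtwo : c₁ ^ 2 * α ^ 4 / (s * t) = c₁ ^ 2 * α ^ 4 / r ^ 2 := by rw [hr2]
    rw [hdivtwo]
    have h1 : 0 ≤ 2 * d * r - 2 * d * α ^ 2 + c₁ ^ 2 * α ^ 4 / r ^ 2 - b := by
      have heq : 2 * d * r - 2 * d * α ^ 2 + c₁ ^ 2 * α ^ 4 / r ^ 2 - b =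
          (2 * d * r ^ 3 - (b + 2 * (d * α ^ 2)) * r ^ 2 + c₁ ^ 2 * α ^ 4) / r ^ 2 := by
        field_simp
        ring
      rw [heq]
      exact div_nonneg claim (sq_nonneg r)
    have h2 : 2 * d * r ≤ d * (s + t) := by nlinarith
    have h3 : d * (p₁ ^ 2 + p₂ ^ 2) = d * (s + t) - 2 * d * α ^ 2 := by
      simp only [hsdef, htdef]; ring
    rw [h3]
    linarith
end

section
/- Let a, d, α > 0. Then the function Φ(p₁, p₂) = d·(p₁² + p₂²) + (a²/4)·α⁴/((p₁² + α²)(p₂² + α²)) − a²/4 satisfies Φ(p) ≥ 0 for all p = (p₁, p₂) ∈ ℝ² if and only if d ≥ a²/(4α²). Moreover, if 0 < d < a²/(4α²), then there exists q > 0 such that Φ(√q, √q) < 0. -/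
/-- Auxiliary: if `d*α^2 < a^2/4` then there is `q > 0` where the symbol is negative
on the diagonal. -/
lemma stmt_11_aux (a d α : ℝ) (ha : 0 < a) (hd : 0 < d) (hα : 0 < α)
    (hlt : d * α ^ 2 < a ^ 2 / 4) :
    ∃ q : ℝ, 0 < q ∧
      d * (q + q) + a ^ 2 / 4 * α ^ 4 / ((q + α ^ 2) * (q + α ^ 2)) - a ^ 2 / 4 < 0 := by
  set K : ℝ := a ^ 2 / 4 with hKdef
  have hK : 0 < K := by positivity
  have hα2 : (0:ℝ) < α ^ 2 := by positivity
  set ε : ℝ := (K - d * α ^ 2) / (3 * d * α ^ 2 + K) with hεdef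
  have hden : (0:ℝ) < 3 * d * α ^ 2 + K := by positivity
  have hε : 0 < ε := div_pos (by linarith) hden
  have hε1 : ε < 1 := by
    rw [hεdef, div_lt_one hden]; nlinarith
  have hεeq : ε * (3 * d * α ^ 2 + K) = K - d * α ^ 2 := by
    rw [hεdef]; field_simp
  -- key inequality
  have key : 2 * d * α ^ 2 * (1 + ε) ^ 2 < K * (2 + ε) := by
    nlinarith [mul_pos hε hK, mul_nonneg (mul_nonneg hd.le hα2.le)
      (mul_nonneg hε.le (sub_nonneg.2 hε1.le))]
  refine ⟨ε * α ^ 2, mul_pos hε hα2, ?_⟩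
  set q : ℝ := ε * α ^ 2 with hqdef
  have hq : 0 < q := mul_pos hε hα2
  have hD : (0:ℝ) < (q + α ^ 2) * (q + α ^ 2) := by positivity
  have hnum : d * (q + q) * ((q + α ^ 2) * (q + α ^ 2)) + K * α ^ 4
      - K * ((q + α ^ 2) * (q + α ^ 2)) < 0 := by
    have h2 : 2 * d * α ^ 4 * (1 + ε) ^ 2 < K * α ^ 2 * (2 + ε) := by nlinarith
    have h3 : d * (q + q) * ((q + α ^ 2) * (q + α ^ 2)) + K * α ^ 4
        - K * ((q + α ^ 2) * (q + α ^ 2))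
        = q * (2 * d * α ^ 4 * (1 + ε) ^ 2 - K * α ^ 2 * (2 + ε)) := by
      rw [hqdef]; ring
    rw [h3]
    exact mul_neg_of_pos_of_neg hq (by linarith)
  have heq : d * (q + q) + K * α ^ 4 / ((q + α ^ 2) * (q + α ^ 2)) - K
      = (d * (q + q) * ((q + α ^ 2) * (q + α ^ 2)) + K * α ^ 4
        - K * ((q + α ^ 2) * (q + α ^ 2))) / ((q + α ^ 2) * (q + α ^ 2)) := by
    field_simp
  rw [heq]
  exact div_neg_of_neg_of_pos hnum hD

theorem stmt_11 (a d α : ℝ) (ha : 0 < a) (hd : 0 < d) (hα : 0 < α) :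
    ((∀ p₁ p₂ : ℝ,
        0 ≤ d * (p₁ ^ 2 + p₂ ^ 2) +
            a ^ 2 / 4 * α ^ 4 / ((p₁ ^ 2 + α ^ 2) * (p₂ ^ 2 + α ^ 2)) - a ^ 2 / 4) ↔
      d ≥ a ^ 2 / (4 * α ^ 2)) ∧
    (d < a ^ 2 / (4 * α ^ 2) → ∃ q : ℝ, 0 < q ∧
      d * (Real.sqrt q ^ 2 + Real.sqrt q ^ 2) +
          a ^ 2 / 4 * α ^ 4 /
            ((Real.sqrt q ^ 2 + α ^ 2) * (Real.sqrt q ^ 2 + α ^ 2)) - a ^ 2 / 4 < 0) := by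
  have hα2 : (0:ℝ) < α ^ 2 := by positivity
  have h4α2 : (0:ℝ) < 4 * α ^ 2 := by positivity
  -- second part as a standalone statement
  have part2 : d < a ^ 2 / (4 * α ^ 2) → ∃ q : ℝ, 0 < q ∧
      d * (Real.sqrt q ^ 2 + Real.sqrt q ^ 2) +
          a ^ 2 / 4 * α ^ 4 /
            ((Real.sqrt q ^ 2 + α ^ 2) * (Real.sqrt q ^ 2 + α ^ 2)) - a ^ 2 / 4 < 0 := by
    intro hlt
    have hlt' : d * α ^ 2 < a ^ 2 / 4 := by
      rw [lt_div_iff₀ h4α2] at hlt; linarith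
    obtain ⟨q, hq, hneg⟩ := stmt_11_aux a d α ha hd hα hlt'
    refine ⟨q, hq, ?_⟩
    rw [Real.sq_sqrt hq.le]
    exact hneg
  refine ⟨⟨?_, ?_⟩, part2⟩
  · intro h
    by_contra hge
    push_neg at hge
    obtain ⟨q, hq, hneg⟩ := part2 hge
    exact absurd (h (Real.sqrt q) (Real.sqrt q)) (not_le.2 hneg)
  · intro hge p₁ p₂
    have hdα : a ^ 2 / 4 ≤ d * α ^ 2 := by
      rw [ge_iff_le, div_le_iff₀ h4α2] at hge; linarith
    set K : ℝ := a ^ 2 / 4 with hKdef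
    have hK : 0 < K := by positivity
    set x : ℝ := p₁ ^ 2 with hxdef
    set y : ℝ := p₂ ^ 2 with hydef
    have hx : 0 ≤ x := sq_nonneg _
    have hy : 0 ≤ y := sq_nonneg _
    have hD : (0:ℝ) < (x + α ^ 2) * (y + α ^ 2) := by positivity
    have hnum : 0 ≤ d * (x + y) * ((x + α ^ 2) * (y + α ^ 2)) + K * α ^ 4
        - K * ((x + α ^ 2) * (y + α ^ 2)) := by
      nlinarith [mul_nonneg hx hy, mul_nonneg (mul_nonneg hx hy) (add_nonneg hx hy),
        mul_nonneg (sub_nonneg.2 hdα)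
          (mul_nonneg (add_nonneg hx hy) hD.le),
        mul_nonneg hK.le (mul_nonneg (mul_nonneg hx hy) (add_nonneg hx hy)),
        mul_nonneg (mul_nonneg hK.le hα2.le) (sq_nonneg (x - y)),
        mul_nonneg (mul_nonneg hK.le hα2.le) (mul_nonneg hx hy)]
    have heq : d * (x + y) + K * α ^ 4 / ((x + α ^ 2) * (y + α ^ 2)) - K
        = (d * (x + y) * ((x + α ^ 2) * (y + α ^ 2)) + K * α ^ 4
          - K * ((x + α ^ 2) * (y + α ^ 2))) / ((x + α ^ 2) * (y + α ^ 2)) := by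
      field_simp
    calc (0:ℝ) ≤ _ / ((x + α ^ 2) * (y + α ^ 2)) := div_nonneg hnum hD.le
    _ = _ := heq.symm
end

section
/- Let n ∈ ℕ, n ≥ 1, let a, b, d, α > 0 with a²/4 > b, c₁ = a/2 + √(a²/4 − b), and let s₀ = s₀(a, b) ∈ (0, 1) be the unique zero of g(s) = −s·ln s + s − b/c₁² on (0, 1). Then the function Φ₁(p) = d·|p|² + c₁²·e^{−|p|²/(4α)} − b on ℝⁿ satisfies Φ₁(p) ≥ 0 for all p ∈ ℝⁿ if and only if d ≥ s₀·c₁²/(4α). -/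
lemma hmono_aux : StrictMonoOn (fun s : ℝ => s - s * Real.log s) (Set.Ioc 0 1) := by
  apply strictMonoOn_of_deriv_pos (convex_Ioc 0 1)
  · apply ContinuousOn.sub continuousOn_id
    exact continuousOn_id.mul (Real.continuousOn_log.mono (by
      intro x hx
      exact ne_of_gt hx.1))
  · intro x hx
    rw [interior_Ioc] at hx
    have hx0 : x ≠ 0 := ne_of_gt hx.1
    have h1 : HasDerivAt (fun s : ℝ => s - s * Real.log s)
        (1 - (1 * Real.log x + x * x⁻¹)) x :=
      (hasDerivAt_id x).sub ((hasDerivAt_id x).mul (Real.hasDerivAt_log hx0))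
    rw [h1.deriv]
    have : (1 : ℝ) - (1 * Real.log x + x * x⁻¹) = -Real.log x := by
      field_simp
      ring
    rw [this]
    exact neg_pos.2 (Real.log_neg hx.1 hx.2)

set_option maxHeartbeats 1000000 in
theorem stmt_12 (n : ℕ) (hn : 1 ≤ n)
    (a b d α : ℝ) (ha : 0 < a) (hb : 0 < b) (hd : 0 < d) (hα : 0 < α)
    (hab : a ^ 2 / 4 > b)
    (c₁ : ℝ) (hc₁ : c₁ = a / 2 + Real.sqrt (a ^ 2 / 4 - b))
    (s₀ : ℝ) (hs₀ : s₀ ∈ Set.Ioo (0 : ℝ) 1)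
    (hzero : -s₀ * Real.log s₀ + s₀ - b / c₁ ^ 2 = 0)
    (huniq : ∀ s ∈ Set.Ioo (0 : ℝ) 1,
      -s * Real.log s + s - b / c₁ ^ 2 = 0 → s = s₀) :
    (∀ p : EuclideanSpace ℝ (Fin n),
        0 ≤ d * ‖p‖ ^ 2 + c₁ ^ 2 * Real.exp (-‖p‖ ^ 2 / (4 * α)) - b) ↔
      d ≥ s₀ * c₁ ^ 2 / (4 * α) := by
  have hsq : Real.sqrt (a ^ 2 / 4 - b) ^ 2 = a ^ 2 / 4 - b :=
    Real.sq_sqrt (by linarith)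
  have hsnn : 0 ≤ Real.sqrt (a ^ 2 / 4 - b) := Real.sqrt_nonneg _
  have hc1 : 0 < c₁ := by rw [hc₁]; positivity
  have hc1sq : 0 < c₁ ^ 2 := by positivity
  have hcb : b < c₁ ^ 2 := by nlinarith
  -- h(s₀) = b / c₁²
  have hhs0 : s₀ - s₀ * Real.log s₀ = b / c₁ ^ 2 := by linarith
  obtain ⟨s, hsdef⟩ : ∃ s : ℝ, s = 4 * α * d / c₁ ^ 2 := ⟨_, rfl⟩
  have hs_pos : 0 < s := by rw [hsdef]; positivity
  have h4 : 4 * α * d = s * c₁ ^ 2 := by rw [hsdef, div_mul_cancel₀ _ hc1sq.ne']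
  constructor
  · intro hall
    by_contra hlt
    rw [ge_iff_le, not_le] at hlt
    have hss : s < s₀ := by
      rw [hsdef, div_lt_iff₀ hc1sq]
      have : d * (4 * α) < s₀ * c₁ ^ 2 := by
        rw [lt_div_iff₀ (by positivity)] at hlt
        linarith
      linarith
    have hs1 : s < 1 := hss.trans hs₀.2
    have hlogs : Real.log s < 0 := Real.log_neg hs_pos hs1
    obtain ⟨t, htdef⟩ : ∃ t : ℝ, t = -(4 * α) * Real.log s := ⟨_, rfl⟩
    have ht : 0 < t := by nlinarith
    obtain ⟨p, hpdef⟩ : ∃ p : EuclideanSpace ℝ (Fin n),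
        p = EuclideanSpace.single (⟨0, by omega⟩ : Fin n) (Real.sqrt t) := ⟨_, rfl⟩
    have hnp : ‖p‖ ^ 2 = t := by
      rw [hpdef, EuclideanSpace.norm_single, Real.norm_eq_abs, sq_abs,
        Real.sq_sqrt ht.le]
    have hthis := hall p
    rw [hnp] at hthis
    have hexp : Real.exp (-t / (4 * α)) = s := by
      have : -t / (4 * α) = Real.log s := by
        rw [htdef]; field_simp
      rw [this, Real.exp_log hs_pos]
    rw [hexp] at hthis
    -- hthis : 0 ≤ d * t + c₁ ^ 2 * s - b
    have hdt : d * t = -(s * c₁ ^ 2 * Real.log s) := by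
      rw [htdef]; nlinarith [h4]
    have hmono := hmono_aux (Set.mem_Ioc.2 ⟨hs_pos, hs1.le⟩)
      (Set.mem_Ioc.2 ⟨hs₀.1, hs₀.2.le⟩) hss
    simp only at hmono
    -- hmono : s - s * log s < s₀ - s₀ * log s₀ = b / c₁²
    rw [hhs0] at hmono
    rw [lt_div_iff₀ hc1sq] at hmono
    nlinarith [hthis, hdt]
  · intro hge
    suffices key : ∀ t : ℝ, 0 ≤ t →
        0 ≤ d * t + c₁ ^ 2 * Real.exp (-t / (4 * α)) - b by
      intro p; exact key (‖p‖ ^ 2) (by positivity)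
    intro t ht
    obtain ⟨u, hudef⟩ : ∃ u : ℝ, u = t / (4 * α) := ⟨_, rfl⟩
    have hu : 0 ≤ u := by rw [hudef]; positivity
    have htu : t = 4 * α * u := by rw [hudef]; field_simp
    have hexp : Real.exp (-t / (4 * α)) = Real.exp (-u) := by
      rw [hudef, neg_div]
    rw [hexp, htu]
    have hs_ge : s₀ ≤ s := by
      rw [hsdef, le_div_iff₀ hc1sq]
      rw [ge_iff_le, div_le_iff₀ (by positivity)] at hge
      linarith
    rcases le_or_gt 1 s with h1 | h1
    · -- exp(-u) ≥ 1 - u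
      have he : -u + 1 ≤ Real.exp (-u) := Real.add_one_le_exp (-u)
      nlinarith [h4, hcb, he, hu, mul_nonneg (mul_nonneg (sub_nonneg.2 h1) hu) hc1sq.le]
    · -- tangent at log s
      have he : (-u - Real.log s) + 1 ≤ Real.exp (-u - Real.log s) :=
        Real.add_one_le_exp _
      have hex : Real.exp (-u - Real.log s) = Real.exp (-u) / s := by
        rw [Real.exp_sub, Real.exp_log hs_pos]
      rw [hex] at he
      have he2 : s * ((-u - Real.log s) + 1) ≤ Real.exp (-u) := by
        rw [div_eq_inv_mul] at he
        calc s * ((-u - Real.log s) + 1) ≤ s * (s⁻¹ * Real.exp (-u)) :=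
              mul_le_mul_of_nonneg_left he hs_pos.le
          _ = Real.exp (-u) := by field_simp
      have hmono := hmono_aux.monotoneOn (Set.mem_Ioc.2 ⟨hs₀.1, hs₀.2.le⟩)
        (Set.mem_Ioc.2 ⟨hs_pos, h1.le⟩) hs_ge
      rw [hhs0] at hmono
      -- hmono : b / c₁² ≤ s - s * log s
      rw [div_le_iff₀ hc1sq] at hmono
      nlinarith [h4, he2, hmono, hu]
end

section
/- Let n ∈ ℕ, n ≥ 1, and b, d, α > 0. Then the function Φ(p) = d·|p|² + b·e^{−|p|²/(4α)} − b on ℝⁿ satisfies Φ(p) ≥ 0 for all p ∈ ℝⁿ if and only if d ≥ b/(4α). Moreover, if 0 < d < b/(4α), then Φ(p) < 0 for all p ≠ 0 with |p| sufficiently small. -/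
lemma exp_neg_le_quad (x : ℝ) (hx : 0 ≤ x) :
    Real.exp (-x) ≤ 1 - x + x ^ 2 := by
  have h1 : 1 + x ≤ Real.exp x := by linarith [Real.add_one_le_exp x]
  have h2 : Real.exp (-x) = 1 / Real.exp x := by
    rw [Real.exp_neg]; ring
  have hpos : 0 < Real.exp x := Real.exp_pos x
  rw [h2, div_le_iff₀ hpos]
  nlinarith [sq_nonneg x, mul_nonneg (mul_nonneg hx hx) hx]

lemma key_neg (b d α : ℝ) (hb : 0 < b) (hα : 0 < α) (h : d < b / (4 * α)) :
    ∃ δ > 0, ∀ t : ℝ, 0 < t → t < δ →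
      d * t + b * Real.exp (-t / (4 * α)) - b < 0 := by
  have hε : 0 < b / (4 * α) - d := by linarith
  refine ⟨(b / (4 * α) - d) * (16 * α ^ 2) / b,
    div_pos (mul_pos hε (by positivity)) hb, ?_⟩
  intro t ht htδ
  have hx : 0 ≤ t / (4 * α) := by positivity
  have hexp : Real.exp (-(t / (4 * α))) ≤ 1 - t / (4 * α) + (t / (4 * α)) ^ 2 :=
    exp_neg_le_quad _ hx
  have heq : -t / (4 * α) = -(t / (4 * α)) := by ring
  rw [heq]
  have h1 : t * b < (b / (4 * α) - d) * (16 * α ^ 2) := by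
    calc t * b < (b / (4 * α) - d) * (16 * α ^ 2) / b * b :=
          mul_lt_mul_of_pos_right htδ hb
      _ = (b / (4 * α) - d) * (16 * α ^ 2) := by field_simp
  have h3 : b * (t / (4 * α)) ^ 2 < (b / (4 * α) - d) * t := by
    rw [div_pow, ← mul_div_assoc, div_lt_iff₀ (by positivity : (0:ℝ) < (4 * α) ^ 2)]
    nlinarith [mul_lt_mul_of_pos_left h1 ht]
  have hexpand : d * t + b * (1 - t / (4 * α) + (t / (4 * α)) ^ 2) - b
      = d * t - b / (4 * α) * t + b * (t / (4 * α)) ^ 2 := by ring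
  have hkey : d * t + b * (1 - t / (4 * α) + (t / (4 * α)) ^ 2) - b < 0 := by
    rw [hexpand]; nlinarith
  nlinarith [mul_le_mul_of_nonneg_left hexp hb.le]

theorem stmt_14 (n : ℕ) (hn : 1 ≤ n) (b d α : ℝ) (hb : 0 < b) (hd : 0 < d) (hα : 0 < α) :
    ((∀ p : EuclideanSpace ℝ (Fin n),
        0 ≤ d * ‖p‖ ^ 2 + b * Real.exp (-‖p‖ ^ 2 / (4 * α)) - b) ↔
      d ≥ b / (4 * α)) ∧
    (d < b / (4 * α) → ∃ δ > 0, ∀ p : EuclideanSpace ℝ (Fin n), p ≠ 0 → ‖p‖ < δ →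
      d * ‖p‖ ^ 2 + b * Real.exp (-‖p‖ ^ 2 / (4 * α)) - b < 0) := by
  have hmain : d < b / (4 * α) → ∃ δ > 0, ∀ p : EuclideanSpace ℝ (Fin n), p ≠ 0 → ‖p‖ < δ →
      d * ‖p‖ ^ 2 + b * Real.exp (-‖p‖ ^ 2 / (4 * α)) - b < 0 := by
    intro h
    obtain ⟨δ₀, hδ₀, hneg⟩ := key_neg b d α hb hα h
    refine ⟨min 1 δ₀, lt_min one_pos hδ₀, ?_⟩
    intro p hp hpδ
    have hnp : 0 < ‖p‖ := norm_pos_iff.mpr hp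
    have ht : 0 < ‖p‖ ^ 2 := by positivity
    apply hneg _ ht
    have h1 : ‖p‖ < 1 := lt_of_lt_of_le hpδ (min_le_left _ _)
    have h2 : ‖p‖ < δ₀ := lt_of_lt_of_le hpδ (min_le_right _ _)
    nlinarith
  constructor
  · constructor
    · intro hall
      by_contra hlt
      push_neg at hlt
      obtain ⟨δ, hδ, hneg⟩ := hmain hlt
      set p : EuclideanSpace ℝ (Fin n) :=
        (δ / 2) • EuclideanSpace.single ⟨0, hn⟩ (1 : ℝ) with hpdef
      have hnorm : ‖p‖ = δ / 2 := by
        rw [hpdef, norm_smul, EuclideanSpace.norm_single, norm_one, mul_one,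
          Real.norm_eq_abs, abs_of_pos (by linarith : (0:ℝ) < δ / 2)]
      have hp0 : p ≠ 0 := by
        intro h0
        rw [h0, norm_zero] at hnorm
        linarith
      have := hneg p hp0 (by rw [hnorm]; linarith)
      have := hall p
      linarith
    · intro hge p
      have hexp : 1 + (-‖p‖ ^ 2 / (4 * α)) ≤ Real.exp (-‖p‖ ^ 2 / (4 * α)) := by
        linarith [Real.add_one_le_exp (-‖p‖ ^ 2 / (4 * α))]
      have hbound : b * (1 + (-‖p‖ ^ 2 / (4 * α))) ≤ b * Real.exp (-‖p‖ ^ 2 / (4 * α)) :=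
        mul_le_mul_of_nonneg_left hexp hb.le
      have ht : 0 ≤ ‖p‖ ^ 2 := by positivity
      have h4α : (0:ℝ) < 4 * α := by positivity
      have hd' : b / (4 * α) * (4 * α) ≤ d * (4 * α) :=
        mul_le_mul_of_nonneg_right hge h4α.le
      rw [div_mul_cancel₀ _ h4α.ne'] at hd'
      have hle : b * (‖p‖ ^ 2 / (4 * α)) ≤ d * ‖p‖ ^ 2 := by
        rw [mul_div_assoc', div_le_iff₀ h4α]
        nlinarith
      have hexpand : b * (1 + (-‖p‖ ^ 2 / (4 * α)))
          = b - b * (‖p‖ ^ 2 / (4 * α)) := by ring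
      rw [hexpand] at hbound
      linarith
  · exact hmain
end

section
/- Let a, b, d, α > 0 with a²/4 > b, c₁ = a/2 + √(a²/4 − b), and let x* ∈ (0, b) be the unique zero of f(x) = 27c₁²x² − (b + 2x)³ on (0, b). Then the function Φ₁(p) = d·|p|² + c₁²·α⁴/(α² + |p|²)² − b on ℝ³ satisfies Φ₁(p) ≥ 0 for all p ∈ ℝ³ if and only if d ≥ 2x*/α². -/
theorem stmt_15 (a b d α : ℝ) (ha : 0 < a) (hb : 0 < b) (hd : 0 < d) (hα : 0 < α)
    (hab : a ^ 2 / 4 > b)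
    (c₁ : ℝ) (hc₁ : c₁ = a / 2 + Real.sqrt (a ^ 2 / 4 - b))
    (xs : ℝ) (hxs : xs ∈ Set.Ioo (0 : ℝ) b)
    (hzero : 27 * c₁ ^ 2 * xs ^ 2 - (b + 2 * xs) ^ 3 = 0)
    (huniq : ∀ x ∈ Set.Ioo (0 : ℝ) b,
      27 * c₁ ^ 2 * x ^ 2 - (b + 2 * x) ^ 3 = 0 → x = xs) :
    (∀ p : EuclideanSpace ℝ (Fin 3),
        0 ≤ d * ‖p‖ ^ 2 + c₁ ^ 2 * α ^ 4 / (α ^ 2 + ‖p‖ ^ 2) ^ 2 - b) ↔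
      d ≥ 2 * xs / α ^ 2 := by
  obtain ⟨hxs0, hxsb⟩ := hxs
  have hα2 : (0:ℝ) < α ^ 2 := by positivity
  have hbx : 0 < b - xs := by linarith
  constructor
  · intro H
    have ht0 : 0 ≤ α ^ 2 * (b - xs) / (3 * xs) := by positivity
    have hp := H (EuclideanSpace.single 0 (Real.sqrt (α ^ 2 * (b - xs) / (3 * xs))))
    rw [EuclideanSpace.norm_single, Real.norm_eq_abs,
      abs_of_nonneg (Real.sqrt_nonneg _), Real.sq_sqrt ht0] at hp
    have hxne : xs ≠ 0 := ne_of_gt hxs0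
    have hdiv : c₁ ^ 2 * α ^ 4 / (α ^ 2 + α ^ 2 * (b - xs) / (3 * xs)) ^ 2
        = (b + 2 * xs) / 3 := by
      rw [div_eq_iff (by positivity)]
      field_simp
      linear_combination hzero
    rw [hdiv] at hp
    have key : (d * (α ^ 2 * (b - xs) / (3 * xs)) + (b + 2 * xs) / 3 - b) * (3 * xs)
        = d * α ^ 2 * (b - xs) - 2 * xs * (b - xs) := by
      field_simp
      ring
    have hp3 : 0 ≤ d * α ^ 2 * (b - xs) - 2 * xs * (b - xs) :=
      key ▸ mul_nonneg hp (by positivity)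
    rw [ge_iff_le, div_le_iff₀ hα2]
    nlinarith [hp3, hbx]
  · intro hdge p
    have hd' : 2 * xs ≤ d * α ^ 2 := by
      rw [ge_iff_le, div_le_iff₀ hα2] at hdge; linarith
    set t : ℝ := ‖p‖ ^ 2 with htdef
    have ht : 0 ≤ t := sq_nonneg _
    have hs2 : (0:ℝ) < (α ^ 2 + t) ^ 2 := by positivity
    have h1 : 0 ≤ (3 * xs * t - α ^ 2 * (b - xs)) ^ 2 * (6 * xs * t + α ^ 2 * (8 * xs + b)) := by
      apply mul_nonneg (sq_nonneg _)
      nlinarith [mul_nonneg hxs0.le ht]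
    have hI : 54 * xs ^ 3 * t * (α ^ 2 + t) ^ 2 - 27 * b * xs ^ 2 * α ^ 2 * (α ^ 2 + t) ^ 2
        + 27 * c₁ ^ 2 * xs ^ 2 * α ^ 6
        = (3 * xs * t - α ^ 2 * (b - xs)) ^ 2 * (6 * xs * t + α ^ 2 * (8 * xs + b)) := by
      linear_combination (α ^ 6) * hzero
    have h1' : 0 ≤ 54 * xs ^ 3 * t * (α ^ 2 + t) ^ 2
        - 27 * b * xs ^ 2 * α ^ 2 * (α ^ 2 + t) ^ 2 + 27 * c₁ ^ 2 * xs ^ 2 * α ^ 6 := by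
      rw [hI]; exact h1
    have h3' : 0 ≤ 27 * xs ^ 2 * (t * (α ^ 2 + t) ^ 2 * (d * α ^ 2 - 2 * xs)) := by
      apply mul_nonneg (by positivity)
      exact mul_nonneg (mul_nonneg ht hs2.le) (by linarith)
    have key2 : 0 ≤ 27 * xs ^ 2 * α ^ 2 *
        (d * t * (α ^ 2 + t) ^ 2 + c₁ ^ 2 * α ^ 4 - b * (α ^ 2 + t) ^ 2) := by
      nlinarith [h1', h3']
    have hpos : (0:ℝ) < 27 * xs ^ 2 * α ^ 2 := by positivity
    have key : 0 ≤ d * t * (α ^ 2 + t) ^ 2 + c₁ ^ 2 * α ^ 4 - b * (α ^ 2 + t) ^ 2 :=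
      nonneg_of_mul_nonneg_right key2 hpos
    have hfin : b - d * t ≤ c₁ ^ 2 * α ^ 4 / (α ^ 2 + t) ^ 2 := by
      rw [le_div_iff₀ hs2]
      have e : (b - d * t) * (α ^ 2 + t) ^ 2
          = b * (α ^ 2 + t) ^ 2 - d * t * (α ^ 2 + t) ^ 2 := by ring
      rw [e]; linarith [key]
    linarith
end

section
/- Let a, d, α > 0. Then the function Φ(p) = d·|p|² + (a²/4)·α⁴/(α² + |p|²)² − a²/4 on ℝ³ satisfies Φ(p) ≥ 0 for all p ∈ ℝ³ if and only if d ≥ a²/(2α²). Moreover, if 0 < d < a²/(2α²), then Φ(p) < 0 for all p ≠ 0 with |p| sufficiently small. -/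
private lemma phi_eq (a d α t : ℝ) (hα : 0 < α) (ht : 0 ≤ t) :
    d * t + a ^ 2 / 4 * α ^ 4 / (α ^ 2 + t) ^ 2 - a ^ 2 / 4
      = t * (d * (α ^ 2 + t) ^ 2 - a ^ 2 / 4 * (2 * α ^ 2 + t)) / (α ^ 2 + t) ^ 2 := by
  have h : (α ^ 2 + t) ≠ 0 := by positivity
  field_simp
  ring

private lemma neg_lemma (a d α : ℝ) (ha : 0 < a) (hd : 0 < d) (hα : 0 < α)
    (hlt : d < a ^ 2 / (2 * α ^ 2)) :
    ∃ δ > 0, ∀ t : ℝ, 0 < t → t < δ ^ 2 →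
      d * t + a ^ 2 / 4 * α ^ 4 / (α ^ 2 + t) ^ 2 - a ^ 2 / 4 < 0 := by
  set ε := a ^ 2 / (2 * α ^ 2) - d with hε_def
  have hε : 0 < ε := sub_pos.mpr hlt
  have hkey : 2 * α ^ 2 * d = a ^ 2 - 2 * α ^ 2 * ε := by
    field_simp [hε_def]
    have h2 : (2 * α ^ 2) * (a ^ 2 / (2 * α ^ 2)) = a ^ 2 := by field_simp
    rw [hε_def]; linear_combination h2
  set m := min (α ^ 2) (4 * ε * α ^ 4 / (5 * a ^ 2)) with hm_def
  have hm : 0 < m := by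
    apply lt_min (by positivity) (by positivity)
  refine ⟨Real.sqrt m, Real.sqrt_pos.mpr hm, ?_⟩
  intro t ht htm
  rw [Real.sq_sqrt hm.le] at htm
  have ht1 : t < α ^ 2 := lt_of_lt_of_le htm (min_le_left _ _)
  have ht2 : t < 4 * ε * α ^ 4 / (5 * a ^ 2) := lt_of_lt_of_le htm (min_le_right _ _)
  have ht2' : 5 * a ^ 2 * t < 4 * ε * α ^ 4 := by
    have := (lt_div_iff₀ (by positivity : (0:ℝ) < 5 * a ^ 2)).mp ht2
    linarith
  rw [phi_eq a d α t hα ht.le]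
  apply div_neg_of_neg_of_pos _ (by positivity)
  have hnum : d * (α ^ 2 + t) ^ 2 - a ^ 2 / 4 * (2 * α ^ 2 + t) < 0 := by
    nlinarith [mul_nonneg hε.le (by positivity : (0:ℝ) ≤ 2 * α ^ 2 * t + t ^ 2),
      mul_nonneg (sq_nonneg a) (mul_nonneg ht.le (sub_nonneg.mpr ht1.le)),
      mul_pos hα (Real.sqrt_pos.mpr hm), sq_nonneg t, mul_pos ht hε]
  nlinarith [mul_pos ht (by positivity : (0:ℝ) < (α ^ 2 + t) ^ 2)]

theorem stmt_16 (a d α : ℝ) (ha : 0 < a) (hd : 0 < d) (hα : 0 < α) :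
    ((∀ p : EuclideanSpace ℝ (Fin 3),
        0 ≤ d * ‖p‖ ^ 2 + a ^ 2 / 4 * α ^ 4 / (α ^ 2 + ‖p‖ ^ 2) ^ 2 - a ^ 2 / 4) ↔
      d ≥ a ^ 2 / (2 * α ^ 2)) ∧
    (d < a ^ 2 / (2 * α ^ 2) → ∃ δ > 0, ∀ p : EuclideanSpace ℝ (Fin 3), p ≠ 0 → ‖p‖ < δ →
      d * ‖p‖ ^ 2 + a ^ 2 / 4 * α ^ 4 / (α ^ 2 + ‖p‖ ^ 2) ^ 2 - a ^ 2 / 4 < 0) := by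
  constructor
  · constructor
    · intro hall
      by_contra h
      push_neg at h
      obtain ⟨δ, hδ, hneg⟩ := neg_lemma a d α ha hd hα h
      set p : EuclideanSpace ℝ (Fin 3) := (δ / 2) • EuclideanSpace.single (0 : Fin 3) (1 : ℝ)
        with hp_def
      have hnorm : ‖p‖ = δ / 2 := by
        rw [hp_def, norm_smul, EuclideanSpace.norm_single]
        simp [abs_of_pos hδ]
      have h1 := hall p
      have h2 := hneg (‖p‖ ^ 2) (by rw [hnorm]; positivity)
        (by rw [hnorm]; nlinarith)
      linarith
    · intro hge p
      have ht : (0:ℝ) ≤ ‖p‖ ^ 2 := by positivity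
      rw [phi_eq a d α _ hα ht]
      apply div_nonneg _ (by positivity)
      apply mul_nonneg ht
      have h2 : a ^ 2 ≤ 2 * α ^ 2 * d := by
        rw [ge_iff_le, div_le_iff₀ (by positivity)] at hge
        linarith
      nlinarith [sq_nonneg ‖p‖, mul_nonneg (sq_nonneg a) ht, mul_nonneg ht ht]
  · intro hlt
    obtain ⟨δ, hδ, hneg⟩ := neg_lemma a d α ha hd hα hlt
    refine ⟨δ, hδ, fun p hp hpδ => ?_⟩
    have h0 : 0 < ‖p‖ := norm_pos_iff.mpr hp
    exact hneg _ (by positivity) (by nlinarith)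
end
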